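/- The minimum of log( N^K · max_{m ∈ {1,…,N^K}} p_m ) over all feasible distributions p for the symmetric TSC scheme equals log((1−(N−1)(D−1))/N) + K·log N. -/

import Mathlib

open Finset Real

/-- Download cost of option `m` (0-indexed: options `1,…,N` of the paper are `m < N`)
in the symmetric TSC scheme with `N` databases and `K` messages. -/
noncomputable def tscCost (N m : ℕ) : ℝ := if m < N then (N : ℝ) - 1 else (N : ℝ)

/-- `p` is a feasible query distribution for the symmetric TSC scheme with expected
normalized download cost `D`. -/
def TSCFeasible (N K : ℕ) (D : ℝ) (p : ℕ → ℝ) : Prop :=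
  (∀ m ∈ Finset.range (N ^ K), 0 ≤ p m) ∧
  (∑ m ∈ Finset.range (N ^ K), p m = 1) ∧
  (1 / ((N : ℝ) - 1)) * (∑ m ∈ Finset.range (N ^ K), p m * tscCost N m) = D

/-- The optimal distribution `p*` for the symmetric TSC scheme. -/
noncomputable def tscOpt (N K : ℕ) (D : ℝ) (m : ℕ) : ℝ :=
  if m < N then (1 - ((N : ℝ) - 1) * (D - 1)) / N
  else ((N : ℝ) - 1) * (D - 1) / ((N : ℝ) ^ K - (N : ℝ))

/-- Download cost of option `m` (0-indexed) in the alternative PIR scheme with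
message length `L`. -/
noncomputable def altCost (N L m : ℕ) : ℝ := if m < N then (L : ℝ) else (L : ℝ) + 1

/-- `p` is a feasible query distribution for the alternative PIR scheme
(`M = N (L+1)^(K-1)` options) with expected normalized download cost `D`. -/
def AltFeasible (N K L : ℕ) (D : ℝ) (p : ℕ → ℝ) : Prop :=
  (∀ m ∈ Finset.range (N * (L + 1) ^ (K - 1)), 0 ≤ p m) ∧
  (∑ m ∈ Finset.range (N * (L + 1) ^ (K - 1)), p m = 1) ∧
  (1 / (L : ℝ)) * (∑ m ∈ Finset.range (N * (L + 1) ^ (K - 1)), p m * altCost N L m) = D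

/-- The optimal distribution `q*` for the alternative PIR scheme. -/
noncomputable def altOpt (N K L : ℕ) (D : ℝ) (m : ℕ) : ℝ :=
  if m < N then (1 - (L : ℝ) * (D - 1)) / N
  else (L : ℝ) * (D - 1) / ((N : ℝ) * ((L : ℝ) + 1) ^ (K - 1) - (N : ℝ))

/-- Rényi divergence of order `α` (`0 < α`, `α ≠ 1`) of a distribution `p` on `M`
options from the uniform distribution on those options (natural logarithm). -/
noncomputable def renyiDiv (M : ℕ) (α : ℝ) (p : ℕ → ℝ) : ℝ :=
  (1 / (α - 1)) * Real.log ((M : ℝ) ^ (α - 1) * ∑ m ∈ Finset.range M, p m ^ α)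

/-- Kullback–Leibler divergence of a distribution `p` on `M` options from the uniform
distribution on those options (natural logarithm, with `0 · log 0 = 0`). -/
noncomputable def klDivUnif (M : ℕ) (p : ℕ → ℝ) : ℝ :=
  ∑ m ∈ Finset.range M, p m * Real.log ((M : ℝ) * p m)

/-- The maximum of `p` over the `M` options. -/
noncomputable def maxOver (M : ℕ) (hM : M ≠ 0) (p : ℕ → ℝ) : ℝ :=
  (Finset.range M).sup' (Finset.nonempty_range_iff.mpr hM) p

lemma sum_ite_split (M N : ℕ) (h : N ≤ M) (f g : ℕ → ℝ) :
    ∑ m ∈ Finset.range M, (if m < N then f m else g m)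
      = (∑ m ∈ Finset.range N, f m) + ∑ m ∈ Finset.Ico N M, g m := by
  rw [Finset.range_eq_Ico, ← Finset.sum_Ico_consecutive _ (Nat.zero_le N) h,
    ← Finset.range_eq_Ico]
  congr 1
  · exact Finset.sum_congr rfl fun m hm => if_pos (Finset.mem_range.mp hm)
  · exact Finset.sum_congr rfl fun m hm => if_neg (by
      have := (Finset.mem_Ico.mp hm).1; omega)

lemma key_ub (N K : ℕ) (hN : 2 ≤ N) (hK : 2 ≤ K) (D : ℝ)
    (hD2 : D ≤ ∑ k ∈ Finset.range K, ((N : ℝ) ^ k)⁻¹) :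
    ((N:ℝ) - 1) * (D - 1) ≤ 1 - ((N:ℝ) ^ (K-1))⁻¹ := by
  have hx : (2:ℝ) ≤ (N:ℝ) := by exact_mod_cast hN
  have hx0 : (0:ℝ) < N := by linarith
  have hx1 : (N:ℝ) - 1 > 0 := by linarith
  have hne : (N:ℝ)⁻¹ ≠ 1 := by
    rw [ne_eq, inv_eq_one]; intro h; rw [h] at hx; linarith
  have hgeom : ∑ k ∈ Finset.range K, ((N : ℝ) ^ k)⁻¹
      = (((N:ℝ)⁻¹) ^ K - 1) / ((N:ℝ)⁻¹ - 1) := by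
    rw [← geom_sum_eq hne]
    exact Finset.sum_congr rfl fun k _ => by rw [← inv_pow]
  have hKsucc : K = (K - 1) + 1 := by omega
  have hpow : (N:ℝ) ^ K = (N:ℝ) ^ (K-1) * N := by
    conv_lhs => rw [hKsucc, pow_succ]
  have hp0 : (0:ℝ) < (N:ℝ) ^ (K-1) := by positivity
  have hinv : ((N:ℝ)⁻¹) ^ K = ((N:ℝ)^(K-1) * N)⁻¹ := by
    rw [inv_pow, hpow]
  have hne2 : (N:ℝ)⁻¹ - 1 ≠ 0 := sub_ne_zero.mpr hne
  have hsum : ∑ k ∈ Finset.range K, ((N : ℝ) ^ k)⁻¹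
      = ((N:ℝ)^(K-1) * N - 1) / ((N:ℝ) ^ (K-1) * ((N:ℝ) - 1)) := by
    rw [hgeom, hinv, div_eq_div_iff hne2 (by positivity)]
    field_simp
    ring
  rw [hsum, le_div_iff₀ (by positivity)] at hD2
  rw [← sub_nonneg]
  have expand : 1 - ((N:ℝ) ^ (K-1))⁻¹ - ((N:ℝ) - 1) * (D - 1)
      = ((N:ℝ)^(K-1) * N - 1 - D * ((N:ℝ)^(K-1) * ((N:ℝ)-1))) / (N:ℝ)^(K-1) := by
    field_simp
    ring
  rw [expand]
  apply div_nonneg _ (le_of_lt hp0)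
  linarith


/-- the minimum of `log (N^K · max_m pₘ)` over feasible distributions
of the symmetric TSC scheme equals `log((1-(N-1)(D-1))/N) + K log N`. -/
theorem tsc_infty_tradeoff (N K : ℕ) (hN : 2 ≤ N) (hK : 2 ≤ K) (D : ℝ)
    (hD1 : 1 ≤ D) (hD2 : D ≤ ∑ k ∈ Finset.range K, ((N : ℝ) ^ k)⁻¹) :
    IsLeast
      {v : ℝ | ∃ p : ℕ → ℝ, TSCFeasible N K D p ∧
        v = Real.log ((N : ℝ) ^ K *
          maxOver (N ^ K) (pow_ne_zero K (show N ≠ 0 by omega)) p)}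
      (Real.log ((1 - ((N : ℝ) - 1) * (D - 1)) / N) + (K : ℝ) * Real.log N) := by
  have hx : (2:ℝ) ≤ (N:ℝ) := by exact_mod_cast hN
  have hx0 : (0:ℝ) < N := by linarith
  have hx1 : (0:ℝ) < (N:ℝ) - 1 := by linarith
  have hNM : N ≤ N ^ K := Nat.le_self_pow (by omega) N
  have hMceq : ((N ^ K : ℕ) : ℝ) = (N:ℝ) ^ K := by push_cast; ring
  have hp0 : (0:ℝ) < (N:ℝ) ^ (K-1) := by positivity
  have hPK : (0:ℝ) < (N:ℝ) ^ K := by positivity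
  set t : ℝ := ((N:ℝ) - 1) * (D - 1) with ht
  have ht0 : 0 ≤ t := mul_nonneg (le_of_lt hx1) (by linarith)
  have ht1 : t ≤ 1 - ((N:ℝ) ^ (K-1))⁻¹ := key_ub N K hN hK D hD2
  have h1t : ((N:ℝ) ^ (K-1))⁻¹ ≤ 1 - t := by linarith
  have h1t0 : 0 < 1 - t := lt_of_lt_of_le (by positivity) h1t
  set a : ℝ := (1 - t) / N with ha
  have ha0 : 0 < a := div_pos h1t0 hx0
  have hpowKK : (N:ℝ) ^ K = (N:ℝ) ^ (K-1) * N := by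
    conv_lhs => rw [show K = (K - 1) + 1 by omega, pow_succ]
  have hNltPK : (N:ℝ) < (N:ℝ) ^ K := by
    rw [hpowKK]
    nlinarith [one_lt_pow₀ (by linarith : (1:ℝ) < N) (by omega : K - 1 ≠ 0)]
  have hden0 : 0 < (N:ℝ) ^ K - N := by linarith
  set b : ℝ := t / ((N:ℝ) ^ K - (N:ℝ)) with hb
  have hb0 : 0 ≤ b := div_nonneg ht0 (le_of_lt hden0)
  have hba : b ≤ a := by
    rw [hb, ha, div_le_div_iff₀ hden0 hx0]
    have h2 : (N:ℝ) ≤ (1 - t) * (N:ℝ)^K := by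
      calc (N:ℝ) = ((N:ℝ)^(K-1))⁻¹ * (N:ℝ)^K := by
            rw [hpowKK]; field_simp
        _ ≤ (1 - t) * (N:ℝ)^K := by
            apply mul_le_mul_of_nonneg_right h1t (le_of_lt hPK)
    nlinarith
  -- max of tscOpt is a
  have hmem0 : 0 ∈ Finset.range (N ^ K) := Finset.mem_range.mpr (by positivity)
  have hmax : maxOver (N ^ K) (pow_ne_zero K (show N ≠ 0 by omega)) (tscOpt N K D) = a := by
    apply le_antisymm
    · apply Finset.sup'_le
      intro m _
      unfold tscOpt
      split
      · exact le_of_eq rfl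
      · exact hba
    · unfold maxOver
      calc a = tscOpt N K D 0 := by
            simp only [tscOpt, if_pos (show (0:ℕ) < N by omega), ha, ht]
        _ ≤ _ := Finset.le_sup' _ hmem0
  -- feasibility of tscOpt
  have hfeas : TSCFeasible N K D (tscOpt N K D) := by
    refine ⟨?_, ?_, ?_⟩
    · intro m _
      unfold tscOpt; split
      · exact le_of_lt ha0
      · exact hb0
    · unfold tscOpt
      rw [sum_ite_split _ _ hNM]
      rw [Finset.sum_const, Finset.sum_const, Nat.card_Ico, card_range, nsmul_eq_mul,
        nsmul_eq_mul, Nat.cast_sub hNM, hMceq]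
      have hdne : (N:ℝ)^K - N ≠ 0 := ne_of_gt hden0
      have hxne : (N:ℝ) ≠ 0 := ne_of_gt hx0
      field_simp
      ring
    · have hcost : ∑ m ∈ Finset.range (N ^ K), tscOpt N K D m * tscCost N m
          = ∑ m ∈ Finset.range (N ^ K),
            (if m < N then a * ((N:ℝ) - 1) else b * N) := by
        apply Finset.sum_congr rfl
        intro m _
        unfold tscOpt tscCost
        split <;> rfl
      rw [hcost, sum_ite_split _ _ hNM, Finset.sum_const, Finset.sum_const, Nat.card_Ico,
        card_range, nsmul_eq_mul, nsmul_eq_mul, Nat.cast_sub hNM, hMceq]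
      rw [hb, ha, ht]
      have hdne : (N:ℝ)^K - N ≠ 0 := ne_of_gt hden0
      have hxne : (N:ℝ) ≠ 0 := ne_of_gt hx0
      have hx1ne : (N:ℝ) - 1 ≠ 0 := ne_of_gt hx1
      field_simp
      ring
  constructor
  · refine ⟨tscOpt N K D, hfeas, ?_⟩
    rw [hmax, Real.log_mul (ne_of_gt hPK) (ne_of_gt ha0), Real.log_pow, ha, ht]
    ring
  · rintro v ⟨p, ⟨hnn, hsum1, hcost⟩, rfl⟩
    set M := maxOver (N ^ K) (pow_ne_zero K (show N ≠ 0 by omega)) p with hM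
    -- sum of p over range N equals 1 - t
    have hS : ∑ m ∈ Finset.range N, p m = 1 - t := by
      have hexp : ∑ m ∈ Finset.range (N ^ K), p m * tscCost N m
          = (N:ℝ) * (∑ m ∈ Finset.range (N ^ K), p m)
            - ∑ m ∈ Finset.range (N ^ K), (if m < N then p m else 0) := by
        rw [Finset.mul_sum, ← Finset.sum_sub_distrib]
        apply Finset.sum_congr rfl
        intro m _
        unfold tscCost
        split <;> ring
      have hite : ∑ m ∈ Finset.range (N ^ K), (if m < N then p m else 0)
          = ∑ m ∈ Finset.range N, p m := by
        rw [sum_ite_split _ _ hNM]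
        simp
      rw [hexp, hite, hsum1, mul_one] at hcost
      have : (N:ℝ) - (∑ m ∈ Finset.range N, p m) = D * ((N:ℝ) - 1) := by
        field_simp at hcost
        linarith
      rw [ht]; linarith
    have haM : a ≤ M := by
      have hSle : ∑ m ∈ Finset.range N, p m ≤ (N:ℝ) * M := by
        calc ∑ m ∈ Finset.range N, p m ≤ ∑ _m ∈ Finset.range N, M := by
              apply Finset.sum_le_sum
              intro m hm
              exact Finset.le_sup' p (Finset.mem_range.mpr
                (lt_of_lt_of_le (Finset.mem_range.mp hm) hNM))
          _ = (N:ℝ) * M := by rw [Finset.sum_const, card_range, nsmul_eq_mul]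
      rw [ha, div_le_iff₀ hx0, mul_comm]
      rw [hS] at hSle
      linarith
    have hstep : Real.log ((1 - ((N : ℝ) - 1) * (D - 1)) / N) + (K:ℝ) * Real.log N
        = Real.log ((N:ℝ)^K * a) := by
      rw [Real.log_mul (ne_of_gt hPK) (ne_of_gt ha0), Real.log_pow, ha, ht]
      ring
    rw [hstep]
    apply Real.log_le_log (by positivity)
    exact mul_le_mul_of_nonneg_left haM (le_of_lt hPK)
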